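/- Fix α > 0 and λ > 1. Let β = (β₁,…,βₙ) and β* = (β₁*,…,βₙ*) be vectors of positive reals such that β is majorized by β*. Then for every x > 0, ∏_{k=1}^{n} (1 - e^{λ(1-e^{x^{β_k}})})^α ≥ ∏_{k=1}^{n} (1 - e^{λ(1-e^{x^{β_k*}})})^α. (In other words, if Xᵢ are independent with Exponentiated Chen distribution F(x;α,βᵢ,λ) and Yᵢ are independent with distribution F(x;α,βᵢ*,λ), then X_{n:n} ≤_st Y_{n:n}.) -/

import Mathlib

/-- The increasing rearrangement of a finite tuple of reals. -/
noncomputable def sortedAsc {n : ℕ} (a : Fin n → ℝ) : Fin n → ℝ :=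
  a ∘ Tuple.sort a

/-- `a` is majorized by `b`: the total sums agree and every prefix sum of the
increasing rearrangement of `a` is at least the corresponding prefix sum for `b`. -/
noncomputable def MajorizedBy {n : ℕ} (a b : Fin n → ℝ) : Prop :=
  (∑ i, a i = ∑ i, b i) ∧
    ∀ k : ℕ, 1 ≤ k → k ≤ n - 1 →
      ∑ i ∈ Finset.univ.filter (fun i : Fin n => (i : ℕ) < k), sortedAsc a i ≥
        ∑ i ∈ Finset.univ.filter (fun i : Fin n => (i : ℕ) < k), sortedAsc b i



section Aux
open Real Set

/-- tanh bound: `2(1-e^{-w}) ≤ w(1+e^{-w})` for `w ≥ 0`. -/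
lemma lem_tanh (w : ℝ) (hw : 0 ≤ w) : 2 * (1 - exp (-w)) ≤ w * (1 + exp (-w)) := by
  set φ : ℝ → ℝ := fun w => w + (w + 2) * exp (-w) - 2 with hφ
  have hmono : Monotone φ := by
    have hd : ∀ t : ℝ, HasDerivAt φ (1 - (t + 1) * exp (-t)) t := by
      intro t
      have h1 : HasDerivAt (fun t : ℝ => -t) (-1) t := (hasDerivAt_id t).neg
      have h2 : HasDerivAt (fun t : ℝ => exp (-t)) (exp (-t) * (-1)) t := h1.exp
      have h3 : HasDerivAt (fun t : ℝ => (t + 2) * exp (-t))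
          (1 * exp (-t) + (t + 2) * (exp (-t) * (-1))) t :=
        ((hasDerivAt_id' t).add_const 2).mul h2
      have h4 := ((hasDerivAt_id' t).add h3).sub_const 2
      exact h4.congr_deriv (by ring)
    apply monotone_of_deriv_nonneg
    · exact fun t => (hd t).differentiableAt
    · intro t
      rw [(hd t).deriv]
      have h := add_one_le_exp t
      have hpos : 0 < exp (-t) := exp_pos _
      have hpq : exp t * exp (-t) = 1 := by rw [← exp_add]; simp
      nlinarith [mul_le_mul_of_nonneg_right h hpos.le]
  have h0 := hmono hw
  simp only [hφ, neg_zero, exp_zero] at h0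
  linarith

/-- `(1+u)(1-e^{-2u}) ≤ 2u` for `u ≥ 0`. -/
lemma lem_L3 (u : ℝ) (hu : 0 ≤ u) : (1 + u) * (1 - exp (-(2 * u))) ≤ 2 * u := by
  set ψ : ℝ → ℝ := fun u => 2 * u - (1 + u) * (1 - exp (-(2 * u))) with hψ
  have hmono : Monotone ψ := by
    have hd : ∀ t : ℝ, HasDerivAt ψ (1 - (2 * t + 1) * exp (-(2 * t))) t := by
      intro t
      have h1 : HasDerivAt (fun t : ℝ => -(2 * t)) (-2) t := by
        exact ((hasDerivAt_id t).const_mul 2).neg.congr_deriv (by norm_num)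
      have h2 : HasDerivAt (fun t : ℝ => exp (-(2 * t))) (exp (-(2 * t)) * (-2)) t := h1.exp
      have h3 : HasDerivAt (fun t : ℝ => (1 + t) * (1 - exp (-(2 * t))))
          ((0 + 1) * (1 - exp (-(2 * t))) + (1 + t) * (0 - exp (-(2 * t)) * (-2))) t :=
        ((hasDerivAt_const t (1:ℝ)).add (hasDerivAt_id' t)).mul
          ((hasDerivAt_const t (1:ℝ)).sub h2)
      have h4 := ((hasDerivAt_id t).const_mul 2).sub h3
      exact h4.congr_deriv (by ring)
    apply monotone_of_deriv_nonneg
    · exact fun t => (hd t).differentiableAt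
    · intro t
      rw [(hd t).deriv]
      have h := add_one_le_exp (2 * t)
      have hpos : 0 < exp (-(2 * t)) := exp_pos _
      have hpq : exp (2 * t) * exp (-(2 * t)) = 1 := by rw [← exp_add]; simp
      nlinarith [mul_le_mul_of_nonneg_right h hpos.le]
  have h0 := hmono hu
  simp only [hψ, mul_zero, add_zero, neg_zero, exp_zero] at h0
  linarith

/-- Key inequality: `(1+u)(1 - e^{λ(1-e^u)}) ≤ λ u e^u` for `u > 0`, `λ ≥ 1`. -/
lemma lem_key (lam u : ℝ) (hlam : 1 ≤ lam) (hu : 0 < u) :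
    (1 + u) * (1 - exp (lam * (1 - exp u))) ≤ lam * u * exp u := by
  set E : ℝ := exp u - 1 with hE
  have hEpos : 0 < E := by
    have := add_one_le_exp u; simp only [hE]; nlinarith
  have hEu : u ≤ E := by have := add_one_le_exp u; simp [hE]; linarith
  set w : ℝ := lam * E with hw
  have hwE : E ≤ w := by nlinarith
  have hw0 : 0 ≤ w := by nlinarith
  have hgw : lam * (1 - exp u) = -w := by simp [hw, hE]; ring
  rw [hgw]
  -- e^{-w} ≤ e^{-u}
  have hru : exp (-w) ≤ exp (-u) := exp_le_exp.2 (by linarith)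
  have ht := lem_tanh w hw0
  have hL3 := lem_L3 u hu.le
  have hq2 : exp (-u) * exp (-u) = exp (-(2 * u)) := by
    rw [← exp_add]; ring_nf
  have hpq : exp u * exp (-u) = 1 := by rw [← exp_add]; simp
  -- chain
  have step1 : (1 + u) * (1 - exp (-w)) ≤ (1 + u) * (w / 2 * (1 + exp (-w))) := by
    have h1u : 0 ≤ 1 + u := by linarith
    apply mul_le_mul_of_nonneg_left _ h1u
    linarith
  have step2 : (1 + u) * (w / 2 * (1 + exp (-w))) ≤ (1 + u) * (w / 2 * (1 + exp (-u))) := by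
    have h1u : 0 ≤ 1 + u := by linarith
    apply mul_le_mul_of_nonneg_left _ h1u
    apply mul_le_mul_of_nonneg_left _ (by linarith : (0:ℝ) ≤ w / 2)
    linarith
  have step3 : (1 + u) * (w / 2 * (1 + exp (-u))) ≤ lam * u * exp u := by
    -- (1+u) * E * (1+e^{-u}) ≤ 2 u e^u, then multiply by lam/2
    have core : (1 + u) * (E * (1 + exp (-u))) ≤ 2 * u * exp u := by
      have hE1 : E * (1 + exp (-u)) = exp u * (1 - exp (-(2 * u))) := by
        have he : exp u * exp (-(2 * u)) = exp (-u) := by rw [← exp_add]; ring_nf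
        simp only [hE]; linear_combination hpq + he
      rw [hE1]
      calc (1 + u) * (exp u * (1 - exp (-(2 * u))))
          = exp u * ((1 + u) * (1 - exp (-(2 * u)))) := by ring
        _ ≤ exp u * (2 * u) := by
            apply mul_le_mul_of_nonneg_left hL3 (exp_pos u).le
        _ = 2 * u * exp u := by ring
    have hlam0 : 0 < lam := by linarith
    calc (1 + u) * (w / 2 * (1 + exp (-u)))
        = lam / 2 * ((1 + u) * (E * (1 + exp (-u)))) := by rw [hw]; ring
      _ ≤ lam / 2 * (2 * u * exp u) := by
          apply mul_le_mul_of_nonneg_left core (by linarith)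
      _ = lam * u * exp u := by ring
  linarith

noncomputable def rho (lam : ℝ) : ℝ → ℝ := fun u =>
  lam * u * exp u * exp (lam * (1 - exp u)) / (1 - exp (lam * (1 - exp u)))

lemma g_lt_one {lam u : ℝ} (hlam : 0 < lam) (hu : 0 < u) :
    exp (lam * (1 - exp u)) < 1 := by
  apply exp_lt_one_iff.2
  have h1 : 1 < exp u := by rw [← exp_zero]; exact exp_lt_exp.2 hu
  nlinarith

lemma rho_hasDerivAt {lam u : ℝ} (hlam : 0 < lam) (hu : 0 < u) :
    HasDerivAt (rho lam)
      ((lam * ((1 * exp u + u * exp u) * exp (lam * (1 - exp u)) +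
          u * exp u * (exp (lam * (1 - exp u)) * (lam * (0 - exp u)))) *
         (1 - exp (lam * (1 - exp u))) -
        lam * u * exp u * exp (lam * (1 - exp u)) *
          (0 - exp (lam * (1 - exp u)) * (lam * (0 - exp u)))) /
        (1 - exp (lam * (1 - exp u))) ^ 2) u := by
  have hinner : HasDerivAt (fun u : ℝ => lam * (1 - exp u))
      (lam * (0 - exp u)) u :=
    (((hasDerivAt_const u (1:ℝ)).sub (Real.hasDerivAt_exp u))).const_mul lam
  have hg : HasDerivAt (fun u : ℝ => exp (lam * (1 - exp u)))
      (exp (lam * (1 - exp u)) * (lam * (0 - exp u))) u := hinner.exp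
  have hN : HasDerivAt (fun u : ℝ => lam * (u * exp u * exp (lam * (1 - exp u))))
      (lam * ((1 * exp u + u * exp u) * exp (lam * (1 - exp u)) +
          u * exp u * (exp (lam * (1 - exp u)) * (lam * (0 - exp u))))) u := by
    exact ((((hasDerivAt_id' u).mul (Real.hasDerivAt_exp u)).mul hg)).const_mul lam
  have hD : HasDerivAt (fun u : ℝ => 1 - exp (lam * (1 - exp u)))
      (0 - exp (lam * (1 - exp u)) * (lam * (0 - exp u))) u :=
    (hasDerivAt_const u (1:ℝ)).sub hg
  have hDne : (1 - exp (lam * (1 - exp u))) ≠ 0 := by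
    have := g_lt_one hlam hu; linarith
  have h := hN.div hD hDne
  have heq : rho lam = (fun y => lam * (y * exp y * exp (lam * (1 - exp y))) /
      (1 - exp (lam * (1 - exp y)))) := by
    funext y; simp only [rho]; ring
  rw [heq]
  exact h.congr_deriv (by ring)

lemma rho_antitoneOn {lam : ℝ} (hlam : 1 ≤ lam) : AntitoneOn (rho lam) (Ioi 0) := by
  have hlam0 : 0 < lam := by linarith
  apply antitoneOn_of_deriv_nonpos (convex_Ioi 0)
  · intro u hu
    exact (rho_hasDerivAt hlam0 hu).continuousAt.continuousWithinAt
  · rw [interior_Ioi]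
    intro u hu
    exact (rho_hasDerivAt hlam0 hu).differentiableAt.differentiableWithinAt
  · rw [interior_Ioi]
    intro u hu
    rw [(rho_hasDerivAt hlam0 hu).deriv]
    apply div_nonpos_of_nonpos_of_nonneg _ (sq_nonneg _)
    set p := exp u with hp
    set g := exp (lam * (1 - exp u)) with hg
    have hfact : lam * ((1 * p + u * p) * g + u * p * (g * (lam * (0 - p)))) * (1 - g) -
        lam * u * p * g * (0 - g * (lam * (0 - p))) =
        lam * p * g * ((1 + u) * (1 - g) - lam * u * p) := by ring
    rw [hfact]
    have hkey := lem_key lam u hlam hu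
    rw [← hg, ← hp] at hkey
    have hppos : 0 < p := exp_pos u
    have hgpos : 0 < g := exp_pos _
    have : (1 + u) * (1 - g) - lam * u * p ≤ 0 := by linarith
    have h1 : 0 < lam * p * g := by positivity
    exact mul_nonpos_of_nonneg_of_nonpos h1.le this

noncomputable def Hf (lam L : ℝ) : ℝ → ℝ := fun t =>
  Real.log (1 - exp (lam * (1 - exp (exp (L * t)))))

lemma Hf_hasDerivAt {lam : ℝ} (L : ℝ) (hlam : 0 < lam) (t : ℝ) :
    HasDerivAt (Hf lam L) (L * rho lam (exp (L * t))) t := by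
  have hupos : 0 < exp (L * t) := exp_pos _
  have hu : HasDerivAt (fun t : ℝ => exp (L * t)) (exp (L * t) * L) t := by
    have := ((hasDerivAt_id t).const_mul L).exp
    simpa using this
  have hinner : HasDerivAt (fun t : ℝ => lam * (1 - exp (exp (L * t))))
      (lam * (0 - exp (exp (L * t)) * (exp (L * t) * L))) t :=
    ((hasDerivAt_const t (1:ℝ)).sub hu.exp).const_mul lam
  have hG := hinner.exp
  have hF := (hasDerivAt_const t (1:ℝ)).sub hG
  have hFpos : 0 < 1 - exp (lam * (1 - exp (exp (L * t)))) := by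
    have := g_lt_one hlam hupos; linarith
  have hH := hF.log (ne_of_gt hFpos)
  exact hH.congr_deriv (by simp only [rho, Pi.sub_apply]; field_simp; ring)

lemma Hf_deriv_eq {lam : ℝ} (L : ℝ) (hlam : 0 < lam) :
    deriv (Hf lam L) = fun t => L * rho lam (exp (L * t)) := by
  funext t
  exact (Hf_hasDerivAt L hlam t).deriv

lemma Hf_deriv_antitone {lam : ℝ} (L : ℝ) (hlam : 1 ≤ lam) :
    Antitone (deriv (Hf lam L)) := by
  have hlam0 : 0 < lam := by linarith
  rw [Hf_deriv_eq L hlam0]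
  intro t1 t2 h
  rcases lt_trichotomy L 0 with hL | hL | hL
  · have he : exp (L * t2) ≤ exp (L * t1) := by
      apply exp_le_exp.2; nlinarith
    have := rho_antitoneOn hlam (mem_Ioi.2 (exp_pos (L * t2)))
      (mem_Ioi.2 (exp_pos (L * t1))) he
    show L * rho lam (exp (L * t2)) ≤ L * rho lam (exp (L * t1))
    nlinarith
  · simp [hL]
  · have he : exp (L * t1) ≤ exp (L * t2) := by
      apply exp_le_exp.2; nlinarith
    have := rho_antitoneOn hlam (mem_Ioi.2 (exp_pos (L * t1)))
      (mem_Ioi.2 (exp_pos (L * t2))) he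
    show L * rho lam (exp (L * t2)) ≤ L * rho lam (exp (L * t1))
    nlinarith

/-- Tangent line bound for a function with antitone derivative. -/
lemma tangent_bound {H D : ℝ → ℝ} (hH : ∀ t, HasDerivAt H (D t) t)
    (hD : Antitone D) (p q : ℝ) : H q ≤ H p + D p * (q - p) := by
  rcases lt_trichotomy p q with h | h | h
  · obtain ⟨c, hc, hceq⟩ := exists_hasDerivAt_eq_slope H D h
      (fun x _ => (hH x).continuousAt.continuousWithinAt) (fun x _ => hH x)
    have hDc : D c ≤ D p := hD hc.1.le
    rw [eq_div_iff (sub_ne_zero.2 h.ne')] at hceq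
    have hm := mul_le_mul_of_nonneg_right hDc (by linarith : (0:ℝ) ≤ q - p)
    linarith
  · simp [h]
  · obtain ⟨c, hc, hceq⟩ := exists_hasDerivAt_eq_slope H D h
      (fun x _ => (hH x).continuousAt.continuousWithinAt) (fun x _ => hH x)
    have hDc : D p ≤ D c := hD hc.2.le
    rw [eq_div_iff (sub_ne_zero.2 h.ne')] at hceq
    have hm := mul_le_mul_of_nonneg_right hDc (by linarith : (0:ℝ) ≤ p - q)
    linarith

/-- Abel-summation positivity. -/
lemma abel_sum (d A : ℕ → ℝ) (n : ℕ)
    (hd : ∀ i j, i ≤ j → j < n → d j ≤ d i)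
    (hS : ∀ k, 1 ≤ k → k < n → 0 ≤ ∑ i ∈ Finset.range k, A i)
    (hSn : ∑ i ∈ Finset.range n, A i = 0) :
    0 ≤ ∑ i ∈ Finset.range n, d i * A i := by
  rcases Nat.eq_zero_or_pos n with h0 | hn
  · simp [h0]
  have key : ∀ k, 1 ≤ k → k ≤ n →
      d (k - 1) * (∑ i ∈ Finset.range k, A i) ≤ ∑ i ∈ Finset.range k, d i * A i := by
    intro k hk1 hkn
    induction k with
    | zero => omega
    | succ m ih =>
      rcases Nat.eq_zero_or_pos m with hm0 | hm
      · subst hm0; simp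
      · have hmn : m ≤ n := by omega
        have ihm := ih hm hmn
        rw [Finset.sum_range_succ, Finset.sum_range_succ]
        have hdm : d m ≤ d (m - 1) := hd (m - 1) m (by omega) (by omega)
        have hSm : 0 ≤ ∑ i ∈ Finset.range m, A i := hS m hm (by omega)
        have : d m * (∑ i ∈ Finset.range m, A i) ≤ d (m - 1) * (∑ i ∈ Finset.range m, A i) :=
          mul_le_mul_of_nonneg_right hdm hSm
        have hmm : m + 1 - 1 = m := by omega
        rw [hmm, mul_add]
        linarith
  have := key n hn le_rfl
  rw [hSn] at this
  simpa using this

/-- Transfer between `Fin`-filtered sums and `range` sums. -/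
lemma sum_range_of_fin {n : ℕ} (k : ℕ) (hk : k ≤ n) (f : Fin n → ℝ) :
    ∑ j ∈ Finset.range k, (if h : j < n then f ⟨j, h⟩ else 0)
      = ∑ i ∈ Finset.univ.filter (fun i : Fin n => (i : ℕ) < k), f i := by
  have h2 : ∑ i : Fin n, (if (i : ℕ) < k then f i else 0)
      = ∑ j ∈ Finset.range n, (if h : j < n then (if j < k then f ⟨j, h⟩ else 0) else 0) := by
    rw [← Fin.sum_univ_eq_sum_range]
    exact Finset.sum_congr rfl (fun i _ => by simp [i.isLt])
  rw [Finset.sum_filter, h2]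
  rw [← Finset.sum_subset (Finset.range_subset_range.2 hk) (fun j hj hjk => by
      have : ¬ j < k := fun h => hjk (Finset.mem_range.2 h)
      simp [this])]
  apply Finset.sum_congr rfl
  intro j hj
  have hjk : j < k := Finset.mem_range.1 hj
  have hjn : j < n := lt_of_lt_of_le hjk hk
  simp [hjn, hjk]

/-- The majorization sum inequality. -/
lemma maj_sum {lam L : ℝ} (hlam : 1 < lam) {n : ℕ} (b bs : Fin n → ℝ)
    (hmaj : MajorizedBy b bs) :
    ∑ k, Hf lam L (bs k) ≤ ∑ k, Hf lam L (b k) := by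
  have hlam0 : 0 < lam := by linarith
  have hHD : ∀ t, HasDerivAt (Hf lam L) (deriv (Hf lam L) t) t := fun t => by
    have h := Hf_hasDerivAt L hlam0 t
    rw [h.deriv]
    exact h
  set a : Fin n → ℝ := sortedAsc b with ha
  set c : Fin n → ℝ := sortedAsc bs with hc
  have hamono : Monotone a := Tuple.monotone_sort b
  set D : ℝ → ℝ := deriv (Hf lam L) with hD
  have hsuma : ∑ i, a i = ∑ i, b i := Equiv.sum_comp (Tuple.sort b) b
  have hsumc : ∑ i, c i = ∑ i, bs i := Equiv.sum_comp (Tuple.sort bs) bs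
  have hHa : ∑ k, Hf lam L (b k) = ∑ k, Hf lam L (a k) :=
    (Equiv.sum_comp (Tuple.sort b) (fun i => Hf lam L (b i))).symm
  have hHc : ∑ k, Hf lam L (bs k) = ∑ k, Hf lam L (c k) :=
    (Equiv.sum_comp (Tuple.sort bs) (fun i => Hf lam L (bs i))).symm
  rw [hHa, hHc]
  -- tangent bound pointwise
  have htan : ∀ i : Fin n, Hf lam L (c i) ≤ Hf lam L (a i) + D (a i) * (c i - a i) :=
    fun i => tangent_bound hHD (Hf_deriv_antitone L hlam.le) (a i) (c i)
  have hsum1 : ∑ i, Hf lam L (c i) ≤ ∑ i, (Hf lam L (a i) + D (a i) * (c i - a i)) :=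
    Finset.sum_le_sum (fun i _ => htan i)
  -- Abel part
  set d' : ℕ → ℝ := fun j => if h : j < n then D (a ⟨j, h⟩) else 0 with hd'
  set A' : ℕ → ℝ := fun j => if h : j < n then (a ⟨j, h⟩ - c ⟨j, h⟩) else 0 with hA'
  have habel : 0 ≤ ∑ j ∈ Finset.range n, d' j * A' j := by
    apply abel_sum
    · intro i j hij hjn
      have hin : i < n := lt_of_le_of_lt hij hjn
      simp only [hd', dif_pos hin, dif_pos hjn]
      exact Hf_deriv_antitone L hlam.le (hamono (by exact hij : (⟨i, hin⟩ : Fin n) ≤ ⟨j, hjn⟩))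
    · intro k hk1 hkn
      have h1 : ∑ i ∈ Finset.range k, A' i =
          ∑ i ∈ Finset.univ.filter (fun i : Fin n => (i : ℕ) < k), (a i - c i) :=
        sum_range_of_fin k hkn.le (fun i => a i - c i)
      rw [h1, Finset.sum_sub_distrib]
      have := hmaj.2 k hk1 (by omega)
      linarith [this]
    · have h1 : ∑ i ∈ Finset.range n, A' i =
          ∑ i ∈ Finset.univ.filter (fun i : Fin n => (i : ℕ) < n), (a i - c i) :=
        sum_range_of_fin n le_rfl (fun i => a i - c i)
      have h2 : Finset.univ.filter (fun i : Fin n => (i : ℕ) < n) = Finset.univ := by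
        apply Finset.filter_true_of_mem
        intro i _
        exact i.isLt
      rw [h1, h2, Finset.sum_sub_distrib, hsuma, hsumc, hmaj.1]
      ring
  have hda : ∑ j ∈ Finset.range n, d' j * A' j =
      ∑ i, D (a i) * (a i - c i) := by
    have heq : ∀ j, d' j * A' j = if h : j < n then (D (a ⟨j, h⟩) * (a ⟨j, h⟩ - c ⟨j, h⟩)) else 0 := by
      intro j
      by_cases h : j < n
      · simp [hd', hA', h]
      · simp [hd', hA', h]
    calc ∑ j ∈ Finset.range n, d' j * A' j
        = ∑ j ∈ Finset.range n, (if h : j < n then (D (a ⟨j, h⟩) * (a ⟨j, h⟩ - c ⟨j, h⟩)) else 0) :=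
          Finset.sum_congr rfl (fun j _ => heq j)
      _ = ∑ i ∈ Finset.univ.filter (fun i : Fin n => (i : ℕ) < n), D (a i) * (a i - c i) :=
          sum_range_of_fin n le_rfl (fun i => D (a i) * (a i - c i))
      _ = ∑ i, D (a i) * (a i - c i) := by
          congr 1
          apply Finset.filter_true_of_mem
          intro i _
          exact i.isLt
  rw [hda] at habel
  have hsplit : ∑ i, (Hf lam L (a i) + D (a i) * (c i - a i))
      = ∑ i, Hf lam L (a i) + ∑ i, (D (a i) * (c i - a i)) := Finset.sum_add_distrib
  have hneg : ∑ i, (D (a i) * (c i - a i)) = - ∑ i, (D (a i) * (a i - c i)) := by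
    rw [← Finset.sum_neg_distrib]
    exact Finset.sum_congr rfl (fun i _ => by ring)
  rw [hsplit, hneg] at hsum1
  linarith

end Aux

/-- Theorem 3: for `λ > 1`, if `β ≺ᵐ β*`, then the distribution function of the
parallel system with Exponentiated Chen components `F(x; α, βᵢ, λ)` is pointwise at
least that of the system with components `F(x; α, βᵢ*, λ)`, i.e. `X_{n:n} ≤_st Y_{n:n}`. -/
theorem parallel_st_order_beta (α lam : ℝ) (hα : 0 < α) (hlam : 1 < lam)
    {n : ℕ} (b bs : Fin n → ℝ)
    (hb : ∀ i, 0 < b i) (hbs : ∀ i, 0 < bs i) (hmaj : MajorizedBy b bs) :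
    ∀ x : ℝ, 0 < x →
      ∏ k, (1 - Real.exp (lam * (1 - Real.exp (x ^ (b k))))) ^ α ≥
        ∏ k, (1 - Real.exp (lam * (1 - Real.exp (x ^ (bs k))))) ^ α := by
  intro x hx
  set L : ℝ := Real.log x with hL
  have hlam0 : (0:ℝ) < lam := by linarith
  have hfac : ∀ t : ℝ, (1 - Real.exp (lam * (1 - Real.exp (x ^ t)))) ^ α
      = Real.exp (Hf lam L t * α) := by
    intro t
    have hxp : x ^ t = Real.exp (L * t) := Real.rpow_def_of_pos hx t
    have hFpos : 0 < 1 - Real.exp (lam * (1 - Real.exp (Real.exp (L * t)))) := by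
      have := g_lt_one hlam0 (Real.exp_pos (L * t))
      linarith
    rw [hxp, Real.rpow_def_of_pos hFpos]
    rfl
  have h1 : ∏ k, (1 - Real.exp (lam * (1 - Real.exp (x ^ (b k))))) ^ α
      = Real.exp (∑ k, Hf lam L (b k) * α) :=
    (Finset.prod_congr rfl (fun k _ => hfac (b k))).trans (Real.exp_sum _ _).symm
  have h2 : ∏ k, (1 - Real.exp (lam * (1 - Real.exp (x ^ (bs k))))) ^ α
      = Real.exp (∑ k, Hf lam L (bs k) * α) :=
    (Finset.prod_congr rfl (fun k _ => hfac (bs k))).trans (Real.exp_sum _ _).symm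
  rw [h1, h2]
  apply Real.exp_le_exp.2
  rw [← Finset.sum_mul, ← Finset.sum_mul]
  exact mul_le_mul_of_nonneg_right (maj_sum hlam b bs hmaj) hα.le
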